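/- Let G be a graph with vertex labeling σ, let r ≥ 1, and let u and v be adjacent vertices of G. Then (T^r_G(v→u), σ) and (T^r_G(u∖v), σ) are isomorphic as labeled rooted trees. -/

import Mathlib

namespace PNViews

/-- A labeled rooted tree, presented by its carrier, root, child relation
(`child a b` means that `b` is a child of `a`), and vertex labels. -/
structure LRT (S : Type) : Type 1 where
  carrier : Type
  root : carrier
  child : carrier → carrier → Prop
  label : carrier → S

/-- An isomorphism of labeled rooted trees. -/
structure LRTIso {S : Type} (T₁ T₂ : LRT S) where
  toEquiv : T₁.carrier ≃ T₂.carrier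
  root_eq : toEquiv T₁.root = T₂.root
  child_iff : ∀ a b : T₁.carrier, T₁.child a b ↔ T₂.child (toEquiv a) (toEquiv b)
  label_eq : ∀ a : T₁.carrier, T₂.label (toEquiv a) = T₁.label a

/-- `NBWalk G l` : the list `l = [v₀, …, v_ℓ]` is a non-backtracking walk in `G`,
i.e. consecutive vertices are adjacent and `v_{i+2} ≠ v_i` for all `i`. -/
inductive NBWalk {V : Type} (G : SimpleGraph V) : List V → Prop
  | single (v : V) : NBWalk G [v]
  | pair {u v : V} : G.Adj u v → NBWalk G [u, v]
  | cons {a b c : V} {rest : List V} : G.Adj a b → a ≠ c →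
      NBWalk G (b :: c :: rest) → NBWalk G (a :: b :: c :: rest)

/-- The radius-`r` PN-view `(T^r_G(v), σ)` of the vertex `v` in the labeled graph
`(G, σ)`: the labeled rooted tree of all non-backtracking walks of length at most `r`
starting at `v`, where each walk of length `ℓ+1` is a child of its length-`ℓ` prefix and
the label of a walk is `σ` applied to its final vertex. -/
def PNview {V S : Type} (G : SimpleGraph V) (σ : V → S) (v : V) (r : ℕ) : LRT S where
  carrier := {l : List V // NBWalk G l ∧ l.head? = some v ∧ l.length ≤ r + 1}
  root := ⟨[v], NBWalk.single v, rfl, Nat.succ_le_succ (Nat.zero_le r)⟩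
  child a b := ∃ w, b.val = a.val ++ [w]
  label a := σ (a.val.getLastD v)

/-- The directional subtree `(T^r_G(v → u), σ)` (for `u` a neighbor of `v`): the PN-view
re-rooted at the child `u` of the root, restricted to the branch through `u`, and
truncated to depth `r - 1`. Concretely: all non-backtracking walks starting with the
step `v, u`, of length at most `r`. -/
def PNviewDir {V S : Type} (G : SimpleGraph V) (σ : V → S) (v u : V) (r : ℕ)
    (hr : 1 ≤ r) (h : G.Adj v u) : LRT S where
  carrier := {l : List V // NBWalk G l ∧ (∃ rest, l = v :: u :: rest) ∧ l.length ≤ r + 1}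
  root := ⟨[v, u], NBWalk.pair h, ⟨[], rfl⟩, Nat.succ_le_succ hr⟩
  child a b := ∃ w, b.val = a.val ++ [w]
  label a := σ (a.val.getLastD v)

/-- The pruned subtree `(T^r_G(v ∖ u), σ)`: the PN-view with the branch containing the
child `u` of the root removed, truncated to depth `r - 1`. Concretely: all
non-backtracking walks starting at `v` not beginning with the step `v, u`,
of length at most `r - 1`. -/
def PNviewMinus {V S : Type} (G : SimpleGraph V) (σ : V → S) (v u : V) (r : ℕ)
    (hr : 1 ≤ r) : LRT S where
  carrier := {l : List V // NBWalk G l ∧ l.head? = some v ∧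
    (¬ ∃ rest, l = v :: u :: rest) ∧ l.length ≤ r}
  root := ⟨[v], NBWalk.single v, rfl, by rintro ⟨rest, h⟩; simp at h, hr⟩
  child a b := ∃ w, b.val = a.val ++ [w]
  label a := σ (a.val.getLastD v)

lemma nbwalk_tail {V : Type} {G : SimpleGraph V} {a b : V} {rest : List V}
    (h : NBWalk G (a :: b :: rest)) : NBWalk G (b :: rest) := by
  cases h with
  | pair h => exact NBWalk.single _
  | cons _ _ h => exact h

lemma nbwalk_ne {V : Type} {G : SimpleGraph V} {a b c : V} {rest : List V}
    (h : NBWalk G (a :: b :: c :: rest)) : a ≠ c := by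
  cases h; assumption

theorem stmt13 {V S : Type} (G : SimpleGraph V) (σ : V → S) (r : ℕ) (hr : 1 ≤ r)
    {v u : V} (h : G.Adj v u) :
    Nonempty (LRTIso (PNviewDir G σ v u r hr h) (PNviewMinus G σ u v r hr)) := by
  refine ⟨{
    toEquiv := {
      toFun := fun x => ⟨x.val.tail, ?_⟩
      invFun := fun y => ⟨v :: y.val, ?_⟩
      left_inv := ?_
      right_inv := ?_ }
    root_eq := ?_
    child_iff := ?_
    label_eq := ?_ }⟩
  · obtain ⟨hnb, ⟨rest, hl⟩, hlen⟩ := x.property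
    rw [hl] at hnb hlen ⊢
    refine ⟨nbwalk_tail hnb, rfl, ?_, ?_⟩
    · rintro ⟨rest', hrest⟩
      obtain rfl : rest = v :: rest' := by injection hrest
      exact nbwalk_ne hnb rfl
    · simpa using Nat.le_of_succ_le_succ hlen
  · obtain ⟨hnb, hhead, hne, hlen⟩ := y.property
    obtain ⟨rest, hl⟩ : ∃ rest, y.val = u :: rest := by
      cases hy : y.val with
      | nil => simp [hy] at hhead
      | cons a t => rw [hy] at hhead; simp at hhead; exact ⟨t, by rw [hhead]⟩
    refine ⟨?_, ⟨rest, by rw [hl]⟩, ?_⟩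
    · rw [hl]; rw [hl] at hnb
      cases rest with
      | nil => exact NBWalk.pair h
      | cons c t =>
        refine NBWalk.cons h ?_ hnb
        rintro rfl
        exact hne ⟨t, hl⟩
    · simpa using Nat.succ_le_succ hlen
  · rintro ⟨l, hnb, ⟨rest, rfl⟩, hlen⟩; rfl
  · rintro ⟨l, hl⟩; simp; rfl
  · rfl
  · rintro ⟨a, hnba, ⟨ra, rfl⟩, hla⟩ ⟨b, hnbb, ⟨rb, rfl⟩, hlb⟩
    show (∃ w, v :: u :: rb = (v :: u :: ra) ++ [w]) ↔ (∃ w, u :: rb = (u :: ra) ++ [w])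
    simp
  · rintro ⟨a, hnba, ⟨ra, rfl⟩, hla⟩
    show σ ((u :: ra).getLastD u) = σ ((v :: u :: ra).getLastD v)
    simp [List.getLastD]

end PNViews
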